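/- The domination number of the incidence graph of any finite projective plane of order q equals 2q: there exists a dominating set of size 2q, and every dominating set has size at least 2q. -/

import Mathlib

open Configuration

/-- `Ps ∪ Ls` is a dominating set of the incidence graph. -/
def IsDominating {P L : Type*} [Membership P L] (Ps : Set P) (Ls : Set L) : Prop :=
  (∀ l : L, l ∈ Ls ∨ ∃ p ∈ Ps, p ∈ l) ∧ (∀ p : P, p ∈ Ps ∨ ∃ l ∈ Ls, p ∈ l)

lemma cover_card_le {P L : Type*} [Membership P L] [ProjectivePlane P L]
    [Fintype P] [Fintype L] (Ps : Set P) :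
    {l : L | ∃ p ∈ Ps, p ∈ l}.ncard ≤ Ps.ncard * (ProjectivePlane.order P L + 1) := by
  classical
  have hsub : {l : L | ∃ p ∈ Ps, p ∈ l}.toFinset ⊆
      Ps.toFinset.biUnion (fun p => {l : L | p ∈ l}.toFinset) := by
    intro l hl
    simp only [Set.mem_toFinset, Set.mem_setOf_eq] at hl
    obtain ⟨p, hp, hpl⟩ := hl
    simp only [Finset.mem_biUnion, Set.mem_toFinset, Set.mem_setOf_eq]
    exact ⟨p, hp, hpl⟩
  have hcount : ∀ p : P, {l : L | p ∈ l}.toFinset.card = ProjectivePlane.order P L + 1 := by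
    intro p
    rw [← Set.ncard_eq_toFinset_card', ← Nat.card_coe_set_eq]
    exact ProjectivePlane.lineCount_eq L p
  calc {l : L | ∃ p ∈ Ps, p ∈ l}.ncard
      = {l : L | ∃ p ∈ Ps, p ∈ l}.toFinset.card := Set.ncard_eq_toFinset_card' _
    _ ≤ (Ps.toFinset.biUnion (fun p => {l : L | p ∈ l}.toFinset)).card :=
        Finset.card_le_card hsub
    _ ≤ ∑ p ∈ Ps.toFinset, {l : L | p ∈ l}.toFinset.card := Finset.card_biUnion_le
    _ = Ps.toFinset.card * (ProjectivePlane.order P L + 1) := by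
        rw [Finset.sum_congr rfl fun p _ => hcount p, Finset.sum_const, smul_eq_mul]
    _ = Ps.ncard * (ProjectivePlane.order P L + 1) := by
        rw [Set.ncard_eq_toFinset_card']

lemma lines_bound {P L : Type*} [Membership P L] [ProjectivePlane P L]
    [Fintype P] [Fintype L] (Ps : Set P) (Ls : Set L)
    (h : ∀ l : L, l ∈ Ls ∨ ∃ p ∈ Ps, p ∈ l) :
    Fintype.card L ≤ Ls.ncard + Ps.ncard * (ProjectivePlane.order P L + 1) := by
  have hsub : (Set.univ : Set L) ⊆ Ls ∪ {l : L | ∃ p ∈ Ps, p ∈ l} := by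
    intro l _
    rcases h l with h' | h'
    · exact Or.inl h'
    · exact Or.inr h'
  calc Fintype.card L = (Set.univ : Set L).ncard := by
        rw [Set.ncard_univ, Nat.card_eq_fintype_card]
    _ ≤ (Ls ∪ {l : L | ∃ p ∈ Ps, p ∈ l}).ncard := Set.ncard_le_ncard hsub (Set.toFinite _)
    _ ≤ Ls.ncard + {l : L | ∃ p ∈ Ps, p ∈ l}.ncard := Set.ncard_union_le _ _
    _ ≤ Ls.ncard + Ps.ncard * (ProjectivePlane.order P L + 1) := by
        exact Nat.add_le_add_left (cover_card_le Ps) _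

/-- The domination number of the incidence graph of a projective plane of order `q`
is exactly `2q`. -/
theorem domination_number_eq_two_q {P L : Type*} [Membership P L] [ProjectivePlane P L]
    [Fintype P] [Fintype L] {q : ℕ} (hq : ProjectivePlane.order P L = q) :
    (∃ (Ps : Set P) (Ls : Set L), IsDominating Ps Ls ∧ Ps.ncard + Ls.ncard = 2 * q) ∧
    (∀ (Ps : Set P) (Ls : Set L), IsDominating Ps Ls → 2 * q ≤ Ps.ncard + Ls.ncard) := by
  classical
  have hq2 : 2 ≤ q := hq ▸ ProjectivePlane.one_lt_order P L
  constructor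
  · -- construction
    obtain ⟨p₁, p₂, p₃, l₁, l₂, l₃, h₁₂, h₁₃, h₂₁, h₂₂, h₂₃, h₃₁, h₃₂, h₃₃⟩ :=
      @ProjectivePlane.exists_config P L _ _
    set p := p₂ with hp
    set l := l₂ with hl
    have hpl : p ∈ l := h₂₂
    refine ⟨{x : P | x ∈ l ∧ x ≠ p}, {m : L | p ∈ m ∧ m ≠ l}, ?_, ?_⟩
    · constructor
      · intro m
        by_cases hpm : p ∈ m
        · by_cases hml : m = l
          · subst hml
            -- need a point on m other than p
            have h3 : 2 < pointCount P m := ProjectivePlane.two_lt_pointCount P m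
            have hcard : ({x : P | x ∈ m}).ncard = pointCount P m := by
              rw [← Nat.card_coe_set_eq]; rfl
            have hne : ({x : P | x ∈ m} \ {p}).Nonempty := by
              rw [← Set.ncard_pos (Set.toFinite _)]
              have := Set.ncard_diff_singleton_of_mem (show p ∈ {x : P | x ∈ m} from hpm)
              omega
            obtain ⟨x, hx⟩ := hne
            exact Or.inr ⟨x, ⟨hx.1, hx.2⟩, hx.1⟩
          · exact Or.inl ⟨hpm, hml⟩
        · have hml : l ≠ m := fun h => hpm (h ▸ hpl)
          obtain ⟨hx1, hx2⟩ := HasPoints.mkPoint_ax (P := P) hml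
          exact Or.inr ⟨_, ⟨hx1, fun h => hpm (h ▸ hx2)⟩, hx2⟩
      · intro x
        by_cases hxl : x ∈ l
        · by_cases hxp : x = p
          · subst hxp
            -- need a line through x other than l
            have hne : l₃ ≠ l := fun h => h₃₃ (h ▸ h₃₂)
            exact Or.inr ⟨l₃, ⟨h₂₃, hne⟩, h₂₃⟩
          · exact Or.inl ⟨hxl, hxp⟩
        · have hxp : x ≠ p := fun h => hxl (h ▸ hpl)
          obtain ⟨hm1, hm2⟩ := HasLines.mkLine_ax (L := L) hxp
          have hne : HasLines.mkLine (L := L) hxp ≠ l := fun h => hxl (h ▸ hm1)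
          exact Or.inr ⟨_, ⟨hm2, hne⟩, hm1⟩
    · -- cardinalities
      have h1 : ({x : P | x ∈ l ∧ x ≠ p}) = {x : P | x ∈ l} \ {p} := by
        ext x; simp [and_comm]
      have h2 : ({m : L | p ∈ m ∧ m ≠ l}) = {m : L | p ∈ m} \ {l} := by
        ext m; simp [and_comm]
      have hc1 : ({x : P | x ∈ l}).ncard = q + 1 := by
        rw [← Nat.card_coe_set_eq]
        exact (ProjectivePlane.pointCount_eq P l).trans (by rw [hq])
      have hc2 : ({m : L | p ∈ m}).ncard = q + 1 := by
        rw [← Nat.card_coe_set_eq]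
        exact (ProjectivePlane.lineCount_eq L p).trans (by rw [hq])
      rw [h1, h2,
        Set.ncard_diff_singleton_of_mem (show p ∈ {x : P | x ∈ l} from hpl),
        Set.ncard_diff_singleton_of_mem (show l ∈ {m : L | p ∈ m} from hpl),
        hc1, hc2]
      omega
  · rintro Ps Ls ⟨hd1, hd2⟩
    set a := Ps.ncard with ha
    set b := Ls.ncard with hb
    have hL : Fintype.card L ≤ b + a * (q + 1) := by
      have := lines_bound Ps Ls hd1
      rwa [hq] at this
    have hP : Fintype.card P ≤ a + b * (q + 1) := by
      have := lines_bound (P := Dual L) (L := Dual P) (Ls : Set (Dual L)) (Ps : Set (Dual P)) hd2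
      rwa [ProjectivePlane.Dual.order, hq] at this
    have hcL : Fintype.card L = q ^ 2 + q + 1 := by
      rw [ProjectivePlane.card_lines P L, hq]
    have hcP : Fintype.card P = q ^ 2 + q + 1 := by
      rw [ProjectivePlane.card_points P L, hq]
    rw [hcL] at hL
    rw [hcP] at hP
    have e1 : a * (q + 1) = a * q + a := by ring
    have e2 : b * (q + 1) = b * q + b := by ring
    have e3 : q ^ 2 = q * q := sq q
    rw [e1, e3] at hL
    rw [e2, e3] at hP
    rcases lt_or_ge a q with h | h
    · have : (a + 1) * q ≤ q * q := Nat.mul_le_mul_right q h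
      have : a * q + q ≤ q * q := by nlinarith
      omega
    · rcases lt_or_ge b q with h' | h'
      · have : (b + 1) * q ≤ q * q := Nat.mul_le_mul_right q h'
        have : b * q + q ≤ q * q := by nlinarith
        omega
      · omega
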